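/- Let R be a commutative domain of characteristic zero, m ≥ 1, and δ_m = x1^m ∂/∂x1 + x2^m ∂/∂x2 on R[x1,x2]. Let P, Q ∈ R[x1,x2] with Q homogeneous of total degree k in x1, x2, and suppose δ_m(P) + x1·x2^m·Q = 0. If m ≥ k + 4, then P ∈ R and Q = 0. -/

import Mathlib

open MvPolynomial

namespace DeltaAux

/-- The exponent finsupp `x1^α x2^β` on `Fin 2`. -/
noncomputable def d2 (α β : ℕ) : Fin 2 →₀ ℕ := Finsupp.single 0 α + Finsupp.single 1 β

@[simp] lemma d2_apply_zero (α β : ℕ) : d2 α β 0 = α := by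
  simp [d2, Finsupp.single_apply]

@[simp] lemma d2_apply_one (α β : ℕ) : d2 α β 1 = β := by
  simp [d2, Finsupp.single_apply]

lemma d2_eq_self (d : Fin 2 →₀ ℕ) : d2 (d 0) (d 1) = d := by
  ext a
  fin_cases a <;> simp

lemma single0_le_d2 {m α β : ℕ} : Finsupp.single (0 : Fin 2) m ≤ d2 α β ↔ m ≤ α := by
  rw [Finsupp.single_le_iff, d2_apply_zero]

lemma single1_le_d2 {m α β : ℕ} : Finsupp.single (1 : Fin 2) m ≤ d2 α β ↔ m ≤ β := by
  rw [Finsupp.single_le_iff, d2_apply_one]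

lemma d2_le_d2 {a b α β : ℕ} : d2 a b ≤ d2 α β ↔ a ≤ α ∧ b ≤ β := by
  constructor
  · intro h
    exact ⟨by simpa using h 0, by simpa using h 1⟩
  · rintro ⟨h1, h2⟩ a
    fin_cases a <;> simpa

lemma d2_sub_d2 (a b α β : ℕ) : d2 α β - d2 a b = d2 (α - a) (β - b) := by
  ext x
  fin_cases x <;> simp [Finsupp.tsub_apply]

lemma d2_sub_single0 (m α β : ℕ) : d2 α β - Finsupp.single (0 : Fin 2) m = d2 (α - m) β := by
  ext x
  fin_cases x <;> simp [Finsupp.tsub_apply, Finsupp.single_apply]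

lemma d2_sub_single1 (m α β : ℕ) : d2 α β - Finsupp.single (1 : Fin 2) m = d2 α (β - m) := by
  ext x
  fin_cases x <;> simp [Finsupp.tsub_apply, Finsupp.single_apply]

lemma d2_add_single0 (α β : ℕ) : d2 α β + Finsupp.single (0 : Fin 2) 1 = d2 (α + 1) β := by
  ext x
  fin_cases x <;> simp [Finsupp.single_apply]

lemma d2_add_single1 (α β : ℕ) : d2 α β + Finsupp.single (1 : Fin 2) 1 = d2 α (β + 1) := by
  ext x
  fin_cases x <;> simp [Finsupp.single_apply]

lemma d2_degree (α β : ℕ) : (d2 α β).degree = α + β := by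
  have h : (d2 α β).degree = ∑ x : Fin 2, d2 α β x := by
    rw [Finsupp.degree]
    exact Finset.sum_subset (Finset.subset_univ _)
      (fun x _ hx => by simpa using Finsupp.notMem_support_iff.mp hx)
  rw [h, Fin.sum_univ_two, d2_apply_zero, d2_apply_one]

variable {R : Type*} [CommRing R]

lemma coeff_pderiv (i : Fin 2) (p : MvPolynomial (Fin 2) R) (μ : Fin 2 →₀ ℕ) :
    coeff μ (pderiv i p) = ((μ i + 1 : ℕ) : R) * coeff (μ + Finsupp.single i 1) p := by
  induction p using MvPolynomial.induction_on' with
  | monomial s a =>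
      rw [pderiv_monomial, coeff_monomial, coeff_monomial]
      split_ifs with h1 h2 h2
      · subst h2
        simp [Finsupp.add_apply, mul_comm]
      · -- h1 : s - single i 1 = μ, h2 : ¬ s = μ + single i 1
        rcases Nat.eq_zero_or_pos (s i) with h0 | h0
        · rw [h0]
          simp
        · exfalso
          apply h2
          rw [← h1, tsub_add_cancel_of_le (Finsupp.single_le_iff.mpr h0)]
      · exfalso
        apply h1
        subst h2
        rw [add_tsub_cancel_right]
      · ring
  | add p q hp hq =>
      rw [map_add, coeff_add, coeff_add, hp, hq]
      ring

lemma coeff_X_pow_mul (i : Fin 2) (n : ℕ) (p : MvPolynomial (Fin 2) R) (μ : Fin 2 →₀ ℕ) :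
    coeff μ (X i ^ n * p) =
      if Finsupp.single i n ≤ μ then coeff (μ - Finsupp.single i n) p else 0 := by
  rw [X_pow_eq_monomial, coeff_monomial_mul']
  simp

end DeltaAux

open DeltaAux

theorem delta_m_relation_forces_trivial
    (R : Type*) [CommRing R] [IsDomain R] [CharZero R] (m k : ℕ) (hm : 1 ≤ m)
    (P Q : MvPolynomial (Fin 2) R) (hQ : Q.IsHomogeneous k)
    (h : (X 0) ^ m * pderiv 0 P + (X 1) ^ m * pderiv 1 P + X 0 * (X 1) ^ m * Q = 0)
    (hmk : m ≥ k + 4) :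
    (∃ r : R, P = C r) ∧ Q = 0 := by
  -- the master coefficient equation
  have key : ∀ α β : ℕ,
      (if m ≤ α then ((α - m + 1 : ℕ) : R) * P.coeff (d2 (α - m + 1) β) else 0)
      + (if m ≤ β then ((β - m + 1 : ℕ) : R) * P.coeff (d2 α (β - m + 1)) else 0)
      + (if 1 ≤ α ∧ m ≤ β then Q.coeff (d2 (α - 1) (β - m)) else 0) = 0 := by
    intro α β
    have hc := congrArg (coeff (d2 α β)) h
    rw [coeff_zero, coeff_add, coeff_add] at hc
    rw [coeff_X_pow_mul, coeff_X_pow_mul] at hc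
    have hX01 : (X (0 : Fin 2) * X 1 ^ m : MvPolynomial (Fin 2) R)
        = monomial (d2 1 m) 1 := by
      rw [X_pow_eq_monomial, X, monomial_mul, one_mul, d2]
    rw [hX01, coeff_monomial_mul'] at hc
    simp only [single0_le_d2, single1_le_d2, d2_le_d2, d2_sub_single0, d2_sub_single1,
      d2_sub_d2] at hc
    rw [DeltaAux.coeff_pderiv, DeltaAux.coeff_pderiv] at hc
    rw [d2_add_single0, d2_add_single1] at hc
    simpa using hc
  have hm4 : 4 ≤ m := le_trans (by omega) hmk
  -- coefficients of P in degree ≤ m vanish off the origin (the ones we need for Q)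
  have hPsmall : ∀ i j : ℕ, 1 ≤ i → j + 1 < m → P.coeff (d2 i j) = 0 := by
    intro i j hi hj
    have hk := key (i + m - 1) j
    rw [if_pos (by omega), if_neg (by omega), if_neg (by omega)] at hk
    have : (i + m - 1) - m + 1 = i := by omega
    rw [this] at hk
    rw [add_zero, add_zero] at hk
    rcases mul_eq_zero.mp hk with h0 | h0
    · exact absurd h0 ((Nat.cast_ne_zero (R := R)).mpr (by omega))
    · exact h0
  -- Q = 0
  have hQ0 : Q = 0 := by
    ext d
    rw [coeff_zero, ← d2_eq_self d]
    set i := d 0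
    set j := d 1
    by_cases hdeg : i + j = k
    · have hk := key (i + 1) (j + m)
      rw [if_neg (by omega), if_pos (by omega), if_pos (by constructor <;> omega)] at hk
      have e1 : j + m - m + 1 = j + 1 := by omega
      have e2 : i + 1 - 1 = i := by omega
      have e3 : j + m - m = j := by omega
      rw [e1, e2, e3] at hk
      have hP0 : P.coeff (d2 (i + 1) (j + 1)) = 0 :=
        hPsmall (i + 1) (j + 1) (by omega) (by omega)
      rw [hP0, mul_zero] at hk
      simpa using hk
    · exact hQ.coeff_eq_zero (by rw [d2_degree]; exact hdeg)
  -- simplified master equation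
  have key' : ∀ α β : ℕ,
      (if m ≤ α then ((α - m + 1 : ℕ) : R) * P.coeff (d2 (α - m + 1) β) else 0)
      + (if m ≤ β then ((β - m + 1 : ℕ) : R) * P.coeff (d2 α (β - m + 1)) else 0) = 0 := by
    intro α β
    have hk := key α β
    rw [hQ0] at hk
    simpa using hk
  -- all coefficients of P with positive first exponent vanish
  have hP1 : ∀ j i : ℕ, 1 ≤ i → P.coeff (d2 i j) = 0 := by
    intro j
    induction j using Nat.strong_induction_on with
    | _ j IH =>
      intro i hi
      have hk := key' (i + m - 1) j
      rw [if_pos (by omega)] at hk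
      have e1 : (i + m - 1) - m + 1 = i := by omega
      rw [e1] at hk
      by_cases hj : m ≤ j
      · rw [if_pos hj, IH (j - m + 1) (by omega) (i + m - 1) (by omega), mul_zero,
          add_zero] at hk
        rcases mul_eq_zero.mp hk with h0 | h0
        · exact absurd h0 ((Nat.cast_ne_zero (R := R)).mpr (by omega))
        · exact h0
      · rw [if_neg hj, add_zero] at hk
        rcases mul_eq_zero.mp hk with h0 | h0
        · exact absurd h0 ((Nat.cast_ne_zero (R := R)).mpr (by omega))
        · exact h0
  -- coefficients with zero first exponent and positive second exponent vanish
  have hP2 : ∀ j : ℕ, 1 ≤ j → P.coeff (d2 0 j) = 0 := by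
    intro j hj
    have hk := key' 0 (j + m - 1)
    rw [if_neg (by omega), if_pos (by omega), zero_add] at hk
    have e1 : (j + m - 1) - m + 1 = j := by omega
    rw [e1] at hk
    rcases mul_eq_zero.mp hk with h0 | h0
    · exact absurd h0 ((Nat.cast_ne_zero (R := R)).mpr (by omega))
    · exact h0
  refine ⟨⟨P.coeff 0, ?_⟩, hQ0⟩
  ext d
  rw [← d2_eq_self d, coeff_C]
  by_cases h0 : d 0 = 0
  · by_cases h1 : d 1 = 0
    · rw [h0, h1, if_pos]
      · congr 1
        ext x
        fin_cases x <;> simp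
      · ext x
        fin_cases x <;> simp
    · rw [h0, hP2 (d 1) (by omega), if_neg]
      intro hcon
      apply h1
      have := congrFun (congrArg (DFunLike.coe) hcon) 1
      simpa using this.symm
  · rw [hP1 (d 1) (d 0) (by omega), if_neg]
    intro hcon
    apply h0
    have := congrFun (congrArg (DFunLike.coe) hcon) 0
    simpa using this.symm
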